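/- arXiv:1701.03767 — 5 statements merged into one kernel-verified Lean document; each statement's English description precedes it below -/
import Mathlib

section
/- For u, v ∈ [0,1] and h_g : [0,1] → [0,1] a continuous strictly increasing bijection with h_g(0)=0, h_g(1)=1, the function φ(u,v) = ∫₀ᵘ h_g⁻¹(u')du' + ∫₀ᵛ h_f⁻¹(v')dv' − uv, minimized over v ∈ [0,1] for fixed u, equals A(u) = ∫₀ᵘ (h_g⁻¹(u') − h_f(u'))du', where h_f : [0,1] → [0,1] is also a continuous strictly increasing bijection with h_f(0)=0, h_f(1)=1. -/
open Set MeasureTheory intervalIntegral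

private lemma int_lb {f : ℝ → ℝ} {c d m : ℝ} (hcd : c ≤ d)
    (hi : IntervalIntegrable f volume c d) (h : ∀ t ∈ Icc c d, m ≤ f t) :
    m * (d - c) ≤ ∫ t in c..d, f t := by
  have := intervalIntegral.integral_mono_on hcd intervalIntegrable_const hi h
  simpa [intervalIntegral.integral_const, smul_eq_mul, mul_comm] using this

private lemma int_ub {f : ℝ → ℝ} {c d M : ℝ} (hcd : c ≤ d)
    (hi : IntervalIntegrable f volume c d) (h : ∀ t ∈ Icc c d, f t ≤ M) :
    (∫ t in c..d, f t) ≤ M * (d - c) := by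
  have := intervalIntegral.integral_mono_on hcd hi intervalIntegrable_const h
  simpa [intervalIntegral.integral_const, smul_eq_mul, mul_comm] using this

private lemma inv_mono {f finv : ℝ → ℝ} (hm : StrictMonoOn f (Icc 0 1))
    (hsurj : SurjOn f (Icc 0 1) (Icc 0 1))
    (hinv : ∀ x ∈ Icc (0:ℝ) 1, finv (f x) = x) :
    MonotoneOn finv (Icc 0 1) ∧ MapsTo finv (Icc 0 1) (Icc 0 1) := by
  constructor
  · intro a ha b hb hab
    obtain ⟨x, hx, hxa⟩ := hsurj ha
    obtain ⟨y, hy, hyb⟩ := hsurj hb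
    rw [← hxa, ← hyb, hinv x hx, hinv y hy]
    exact (hm.le_iff_le hx hy).mp (by rw [hxa, hyb]; exact hab)
  · intro a ha
    obtain ⟨x, hx, hxa⟩ := hsurj ha
    rw [← hxa, hinv x hx]; exact hx

/-- Young's identity for the inverse of a continuous strictly monotone bijection. -/
private lemma young {f finv : ℝ → ℝ} (hc : ContinuousOn f (Icc 0 1))
    (hm : StrictMonoOn f (Icc 0 1)) (hmaps : MapsTo f (Icc 0 1) (Icc 0 1))
    (hsurj : SurjOn f (Icc 0 1) (Icc 0 1)) (f0 : f 0 = 0)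
    (hinv : ∀ x ∈ Icc (0:ℝ) 1, finv (f x) = x) :
    ∀ u ∈ Icc (0:ℝ) 1, (∫ t in (0:ℝ)..(f u), finv t) + (∫ s in (0:ℝ)..u, f s) = u * f u := by
  obtain ⟨finv_mono, finv_maps⟩ := inv_mono hm hsurj hinv
  -- integrability
  have hfi : ∀ a ∈ Icc (0:ℝ) 1, ∀ b ∈ Icc (0:ℝ) 1, IntervalIntegrable f volume a b := by
    intro a ha b hb
    exact (hc.mono (uIcc_subset_Icc ha hb)).intervalIntegrable
  have hfinvi : ∀ a ∈ Icc (0:ℝ) 1, ∀ b ∈ Icc (0:ℝ) 1, IntervalIntegrable finv volume a b := by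
    intro a ha b hb
    exact (finv_mono.mono (uIcc_subset_Icc ha hb)).intervalIntegrable
  set Ψ : ℝ → ℝ := fun x => (∫ t in (0:ℝ)..(f x), finv t) + (∫ s in (0:ℝ)..x, f s) - x * f x
    with hΨ
  have h0 : (0:ℝ) ∈ Icc (0:ℝ) 1 := by norm_num
  have hΨ0 : Ψ 0 = 0 := by simp [hΨ, f0]
  have key : ∀ x ∈ Icc (0:ℝ) 1, ∀ y ∈ Icc (0:ℝ) 1, x ≤ y →
      |Ψ y - Ψ x| ≤ (y - x) * (f y - f x) := by
    intro x hx y hy hxy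
    have hfx := hmaps hx
    have hfy := hmaps hy
    have hfxy : f x ≤ f y := (hm.le_iff_le hx hy).mpr hxy
    have e1 : (∫ t in (0:ℝ)..(f y), finv t) - (∫ t in (0:ℝ)..(f x), finv t)
        = ∫ t in (f x)..(f y), finv t :=
      intervalIntegral.integral_interval_sub_left (hfinvi 0 h0 (f y) hfy) (hfinvi 0 h0 (f x) hfx)
    have e2 : (∫ s in (0:ℝ)..y, f s) - (∫ s in (0:ℝ)..x, f s) = ∫ s in x..y, f s :=
      intervalIntegral.integral_interval_sub_left (hfi 0 h0 y hy) (hfi 0 h0 x hx)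
    have i1l : x * (f y - f x) ≤ ∫ t in (f x)..(f y), finv t := by
      apply int_lb hfxy ((hfinvi (f x) hfx (f y) hfy))
      intro t ht
      have ht' : t ∈ Icc (0:ℝ) 1 := ⟨hfx.1.trans ht.1, ht.2.trans hfy.2⟩
      calc x = finv (f x) := (hinv x hx).symm
        _ ≤ finv t := finv_mono hfx ht' ht.1
    have i1u : (∫ t in (f x)..(f y), finv t) ≤ y * (f y - f x) := by
      apply int_ub hfxy ((hfinvi (f x) hfx (f y) hfy))
      intro t ht
      have ht' : t ∈ Icc (0:ℝ) 1 := ⟨hfx.1.trans ht.1, ht.2.trans hfy.2⟩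
      calc finv t ≤ finv (f y) := finv_mono ht' hfy ht.2
        _ = y := hinv y hy
    have i2l : f x * (y - x) ≤ ∫ s in x..y, f s := by
      apply int_lb hxy (hfi x hx y hy)
      intro s hs
      have hs' : s ∈ Icc (0:ℝ) 1 := ⟨hx.1.trans hs.1, hs.2.trans hy.2⟩
      exact (hm.le_iff_le hx hs').mpr hs.1
    have i2u : (∫ s in x..y, f s) ≤ f y * (y - x) := by
      apply int_ub hxy (hfi x hx y hy)
      intro s hs
      have hs' : s ∈ Icc (0:ℝ) 1 := ⟨hx.1.trans hs.1, hs.2.trans hy.2⟩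
      exact (hm.le_iff_le hs' hy).mpr hs.2
    have hd : Ψ y - Ψ x = (∫ t in (f x)..(f y), finv t) + (∫ s in x..y, f s)
        - (y * f y - x * f x) := by
      rw [← e1, ← e2]; simp [hΨ]; ring
    rw [abs_le]
    constructor <;> nlinarith
  intro u hu
  have main : ∀ n : ℕ, |Ψ u| ≤ 1 / (n + 1 : ℝ) := by
    intro n
    have hn : (0:ℝ) < (n:ℝ) + 1 := by positivity
    have hpt : ∀ k : ℕ, k ≤ n + 1 → (k : ℝ) * u / (n + 1) ∈ Icc (0:ℝ) 1 := by
      intro k hk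
      constructor
      · exact div_nonneg (mul_nonneg (Nat.cast_nonneg k) hu.1) hn.le
      · rw [div_le_one hn]
        calc (k:ℝ) * u ≤ (k:ℝ) * 1 := by
              exact mul_le_mul_of_nonneg_left hu.2 (Nat.cast_nonneg k)
          _ ≤ (n:ℝ) + 1 := by
              rw [mul_one]; exact_mod_cast Nat.cast_le.mpr hk |>.trans (by norm_num)
    have ind : ∀ k : ℕ, k ≤ n + 1 →
        |Ψ ((k : ℝ) * u / (n + 1))| ≤ u / (n + 1) * f ((k : ℝ) * u / (n + 1)) := by
      intro k
      induction k with
      | zero =>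
        intro _
        simp only [Nat.cast_zero, zero_mul, zero_div, hΨ0, abs_zero]
        rw [f0, mul_zero]
      | succ k ih =>
        intro hk
        have hk' : k ≤ n + 1 := Nat.le_of_succ_le hk
        set x := (k : ℝ) * u / (n + 1)
        set y := ((k : ℝ) + 1) * u / (n + 1)
        have hxmem := hpt k hk'
        have hymem : y ∈ Icc (0:ℝ) 1 := by
          have := hpt (k + 1) hk; push_cast at this ⊢; exact this
        have hxy : x ≤ y := by
          have h1 : (k:ℝ) * u ≤ ((k:ℝ) + 1) * u := by nlinarith [hu.1]
          exact div_le_div_of_nonneg_right h1 hn.le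
        have hyx : y - x = u / (n + 1) := by
          show ((k : ℝ) + 1) * u / (n + 1) - (k : ℝ) * u / (n + 1) = u / (n + 1)
          field_simp; ring
        have h1 := key x hxmem y hymem hxy
        have h2 : |Ψ y| ≤ |Ψ x| + |Ψ y - Ψ x| := by
          calc |Ψ y| = |Ψ x + (Ψ y - Ψ x)| := by ring_nf
            _ ≤ |Ψ x| + |Ψ y - Ψ x| := abs_add_le _ _
        have hfxy : f x ≤ f y := (hm.le_iff_le hxmem hymem).mpr hxy
        rw [show ((k + 1 : ℕ) : ℝ) * u / (n + 1) = y by push_cast; rfl]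
        calc |Ψ y| ≤ |Ψ x| + |Ψ y - Ψ x| := h2
          _ ≤ u / (n + 1) * f x + (y - x) * (f y - f x) := add_le_add (ih hk') h1
          _ = u / (n + 1) * f y := by rw [hyx]; ring
    have hfin := ind (n + 1) le_rfl
    have he : ((n + 1 : ℕ) : ℝ) * u / (n + 1) = u := by
      push_cast; field_simp
    rw [he] at hfin
    have hfu := hmaps hu
    calc |Ψ u| ≤ u / (n + 1) * f u := hfin
      _ ≤ 1 / (n + 1) := by
          have h3 : u * f u ≤ 1 := by nlinarith [hu.1, hu.2, hfu.1, hfu.2]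
          rw [div_mul_eq_mul_div, div_le_div_iff₀ hn hn]
          nlinarith [h3, hn.le]
  have hz : |Ψ u| ≤ 0 := ge_of_tendsto' tendsto_one_div_add_atTop_nhds_zero_nat main
  have hz' : Ψ u = 0 := abs_eq_zero.mp (le_antisymm hz (abs_nonneg _))
  simp only [hΨ] at hz'
  linarith

/-- The minimum over `v ∈ [0,1]` of
`φ(u,v) = ∫₀ᵘ h_g⁻¹ + ∫₀ᵛ h_f⁻¹ − uv` equals
`A(u) = ∫₀ᵘ (h_g⁻¹(s) − h_f(s)) ds`, attained at `v = h_f(u)`. -/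
theorem stmt0
    (hf hg hfinv hginv : ℝ → ℝ)
    (hf_cont : ContinuousOn hf (Icc 0 1)) (hg_cont : ContinuousOn hg (Icc 0 1))
    (hf_mono : StrictMonoOn hf (Icc 0 1)) (hg_mono : StrictMonoOn hg (Icc 0 1))
    (hf_maps : MapsTo hf (Icc 0 1) (Icc 0 1)) (hg_maps : MapsTo hg (Icc 0 1) (Icc 0 1))
    (hf_surj : SurjOn hf (Icc 0 1) (Icc 0 1)) (hg_surj : SurjOn hg (Icc 0 1) (Icc 0 1))
    (hf0 : hf 0 = 0) (hf1 : hf 1 = 1) (hg0 : hg 0 = 0) (hg1 : hg 1 = 1)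
    (hfinv_left : ∀ v ∈ Icc (0:ℝ) 1, hfinv (hf v) = v)
    (hfinv_right : ∀ v ∈ Icc (0:ℝ) 1, hf (hfinv v) = v)
    (hginv_left : ∀ u ∈ Icc (0:ℝ) 1, hginv (hg u) = u)
    (hginv_right : ∀ u ∈ Icc (0:ℝ) 1, hg (hginv u) = u) :
    ∀ u ∈ Icc (0:ℝ) 1,
      IsLeast
        ((fun v => (∫ s in (0:ℝ)..u, hginv s) + (∫ t in (0:ℝ)..v, hfinv t) - u * v) ''
          Icc (0:ℝ) 1)
        (∫ s in (0:ℝ)..u, (hginv s - hf s)) ∧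
      (∫ s in (0:ℝ)..u, hginv s) + (∫ t in (0:ℝ)..(hf u), hfinv t) - u * hf u
        = ∫ s in (0:ℝ)..u, (hginv s - hf s) := by
  intro u hu
  have h0 : (0:ℝ) ∈ Icc (0:ℝ) 1 := by norm_num
  obtain ⟨finv_mono, finv_maps⟩ := inv_mono hf_mono hf_surj hfinv_left
  obtain ⟨ginv_mono, ginv_maps⟩ := inv_mono hg_mono hg_surj hginv_left
  have hfinvi : ∀ a ∈ Icc (0:ℝ) 1, ∀ b ∈ Icc (0:ℝ) 1, IntervalIntegrable hfinv volume a b :=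
    fun a ha b hb => (finv_mono.mono (uIcc_subset_Icc ha hb)).intervalIntegrable
  have hfi : IntervalIntegrable hf volume 0 u :=
    (hf_cont.mono (uIcc_subset_Icc h0 hu)).intervalIntegrable
  have hginvi : IntervalIntegrable hginv volume 0 u :=
    (ginv_mono.mono (uIcc_subset_Icc h0 hu)).intervalIntegrable
  have hsub : (∫ s in (0:ℝ)..u, (hginv s - hf s))
      = (∫ s in (0:ℝ)..u, hginv s) - ∫ s in (0:ℝ)..u, hf s :=
    intervalIntegral.integral_sub hginvi hfi
  have hy := young hf_cont hf_mono hf_maps hf_surj hf0 hfinv_left u hu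
  have heq : (∫ s in (0:ℝ)..u, hginv s) + (∫ t in (0:ℝ)..(hf u), hfinv t) - u * hf u
      = ∫ s in (0:ℝ)..u, (hginv s - hf s) := by rw [hsub]; linarith
  have hm := hf_maps hu
  refine ⟨⟨⟨hf u, hm, heq⟩, ?_⟩, heq⟩
  rintro z ⟨v, hv, rfl⟩
  simp only
  rw [← heq]
  have hdiff : (∫ t in (0:ℝ)..v, hfinv t) - (∫ t in (0:ℝ)..(hf u), hfinv t)
      = ∫ t in (hf u)..v, hfinv t :=
    intervalIntegral.integral_interval_sub_left (hfinvi 0 h0 v hv) (hfinvi 0 h0 (hf u) hm)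
  have hkey : u * (v - hf u) ≤ ∫ t in (hf u)..v, hfinv t := by
    rcases le_total (hf u) v with hle | hle
    · apply int_lb hle (hfinvi _ hm _ hv)
      intro t ht
      have ht' : t ∈ Icc (0:ℝ) 1 := ⟨hm.1.trans ht.1, ht.2.trans hv.2⟩
      calc u = hfinv (hf u) := (hfinv_left u hu).symm
        _ ≤ hfinv t := finv_mono hm ht' ht.1
    · rw [intervalIntegral.integral_symm]
      have hub : (∫ t in v..(hf u), hfinv t) ≤ u * (hf u - v) := by
        apply int_ub hle (hfinvi _ hv _ hm)
        intro t ht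
        have ht' : t ∈ Icc (0:ℝ) 1 := ⟨hv.1.trans ht.1, ht.2.trans hm.2⟩
        calc hfinv t ≤ hfinv (hf u) := finv_mono ht' hm ht.2
          _ = u := hfinv_left u hu
      linarith
  linarith [hdiff, hkey]
end

section
/- With f₀, f₁ continuous strictly increasing cdf's, T = f₁⁻¹∘f₀, T_λ(x)=(1−λ)x+λT(x), and f_λ the cdf of the pushforward of df₀ by T_λ: for any bounded measurable h : [0,1] → ℝ and λ ∈ [0,1], ∫₀¹ h(u) (f₀⁻¹(u) − f_λ⁻¹(u)) du = λ ∫_ℝ (x − T(x)) h(f₀(x)) df₀(x). In particular the map λ ↦ ∫₀¹ h(u) f_λ⁻¹(u) du is affine in λ. -/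
open Set MeasureTheory intervalIntegral

/-- For the displacement interpolation with
`f_λ⁻¹(u) = (1−λ)f₀⁻¹(u) + λf₁⁻¹(u)` and any bounded measurable `h`,
`∫₀¹ h(u)(f₀⁻¹(u) − f_λ⁻¹(u)) du = λ ∫_ℝ (x − T(x)) h(f₀(x)) dμ₀(x)`;
in particular `λ ↦ ∫₀¹ h(u) f_λ⁻¹(u) du` is affine in `λ`. -/
theorem stmt9 (f₀ f₁ f₀inv f₁inv : ℝ → ℝ) (μ₀ : Measure ℝ) [IsProbabilityMeasure μ₀]
    (hf₀_cont : Continuous f₀) (hf₁_cont : Continuous f₁)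
    (hf₀_mono : StrictMono f₀) (hf₁_mono : StrictMono f₁)
    (hf₀_range : Set.range f₀ = Ioo (0:ℝ) 1) (hf₁_range : Set.range f₁ = Ioo (0:ℝ) 1)
    (hinv₀_left : ∀ x, f₀inv (f₀ x) = x) (hinv₀_right : ∀ u ∈ Ioo (0:ℝ) 1, f₀ (f₀inv u) = u)
    (hinv₁_left : ∀ x, f₁inv (f₁ x) = x) (hinv₁_right : ∀ u ∈ Ioo (0:ℝ) 1, f₁ (f₁inv u) = u)
    (hcdf : ∀ x, (μ₀ (Iic x)).toReal = f₀ x)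
    (hmom₀ : IntegrableOn f₀inv (Ioo (0:ℝ) 1)) (hmom₁ : IntegrableOn f₁inv (Ioo (0:ℝ) 1))
    (h : ℝ → ℝ) (hmeas : Measurable h) (M : ℝ) (hM : ∀ u, |h u| ≤ M)
    (hT_int : Integrable (fun x => x - f₁inv (f₀ x)) μ₀)
    (lam : ℝ) (hlam : lam ∈ Icc (0:ℝ) 1) :
    (∫ u in (0:ℝ)..1, h u * (f₀inv u - ((1 - lam) * f₀inv u + lam * f₁inv u))) =
      lam * ∫ x, (x - f₁inv (f₀ x)) * h (f₀ x) ∂μ₀ ∧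
    ∃ a b : ℝ, ∀ t ∈ Icc (0:ℝ) 1,
      (∫ u in (0:ℝ)..1, h u * ((1 - t) * f₀inv u + t * f₁inv u)) = a + b * t := by
  have hμIic : ∀ x, μ₀ (Iic x) = ENNReal.ofReal (f₀ x) := by
    intro x
    rw [← hcdf x, ENNReal.ofReal_toReal (measure_ne_top μ₀ _)]
  have hrange : ∀ x, f₀ x ∈ Ioo (0:ℝ) 1 := by
    intro x; rw [← hf₀_range]; exact mem_range_self x
  -- Pushforward of μ₀ by f₀ is Lebesgue on (0,1)
  have hmap : Measure.map f₀ μ₀ = volume.restrict (Ioo (0:ℝ) 1) := by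
    have : IsProbabilityMeasure (Measure.map f₀ μ₀) :=
      Measure.isProbabilityMeasure_map hf₀_cont.measurable.aemeasurable
    refine Measure.ext_of_Iic _ _ (fun t => ?_)
    rw [Measure.map_apply hf₀_cont.measurable measurableSet_Iic,
      Measure.restrict_apply measurableSet_Iic]
    rcases le_or_gt t 0 with ht0 | ht0
    · have h1 : f₀ ⁻¹' Iic t = ∅ := by
        ext x; simp only [mem_preimage, mem_Iic, mem_empty_iff_false, iff_false, not_le]
        exact lt_of_le_of_lt ht0 (hrange x).1
      have h2 : Iic t ∩ Ioo (0:ℝ) 1 = ∅ := by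
        ext x; simp only [mem_inter_iff, mem_Iic, mem_Ioo, mem_empty_iff_false, iff_false]
        rintro ⟨hx, hx0, -⟩; exact absurd (hx.trans ht0) (not_le.2 hx0)
      rw [h1, h2, measure_empty, measure_empty]
    rcases lt_or_ge t 1 with ht1 | ht1
    · have htmem : t ∈ Ioo (0:ℝ) 1 := ⟨ht0, ht1⟩
      have h1 : f₀ ⁻¹' Iic t = Iic (f₀inv t) := by
        ext x
        simp only [mem_preimage, mem_Iic]
        constructor
        · intro hx
          rw [← hinv₀_right t htmem] at hx
          exact hf₀_mono.le_iff_le.mp hx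
        · intro hx
          rw [← hinv₀_right t htmem]
          exact hf₀_mono.le_iff_le.mpr hx
      have h2 : Iic t ∩ Ioo (0:ℝ) 1 = Ioc (0:ℝ) t := by
        ext x
        simp only [mem_inter_iff, mem_Iic, mem_Ioo, mem_Ioc]
        constructor
        · rintro ⟨hx, hx0, -⟩; exact ⟨hx0, hx⟩
        · rintro ⟨hx0, hx⟩; exact ⟨hx, hx0, lt_of_le_of_lt hx ht1⟩
      rw [h1, h2, hμIic, hinv₀_right t htmem, Real.volume_Ioc]
      simp
    · have h1 : f₀ ⁻¹' Iic t = univ := by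
        ext x; simp only [mem_preimage, mem_Iic, mem_univ, iff_true]
        exact le_trans (hrange x).2.le ht1
      have h2 : Iic t ∩ Ioo (0:ℝ) 1 = Ioo (0:ℝ) 1 := by
        refine inter_eq_self_of_subset_right (fun x hx => ?_)
        exact le_trans hx.2.le ht1
      rw [h1, h2, measure_univ, Real.volume_Ioo]
      simp
  -- Change of variables
  set g : ℝ → ℝ := fun u => (f₀inv u - f₁inv u) * h u with hg_def
  have hg_meas : AEStronglyMeasurable g (volume.restrict (Ioo (0:ℝ) 1)) :=
    (hmom₀.aestronglyMeasurable.sub hmom₁.aestronglyMeasurable).mul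
      hmeas.aestronglyMeasurable
  have hchange : ∫ u in Ioo (0:ℝ) 1, g u = ∫ x, (x - f₁inv (f₀ x)) * h (f₀ x) ∂μ₀ := by
    have := MeasureTheory.integral_map (φ := f₀) (f := g)
      hf₀_cont.measurable.aemeasurable (by rwa [hmap])
    rw [hmap] at this
    rw [this]
    refine integral_congr_ae (Filter.Eventually.of_forall fun x => ?_)
    simp only [hg_def, hinv₀_left x]
  -- Rewrite interval integrals over Ioc then Ioo
  have hIoc : ∀ F : ℝ → ℝ, (∫ u in (0:ℝ)..1, F u) = ∫ u in Ioo (0:ℝ) 1, F u := by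
    intro F
    rw [intervalIntegral.integral_of_le (by norm_num : (0:ℝ) ≤ 1),
      MeasureTheory.integral_Ioc_eq_integral_Ioo]
  constructor
  · have hpt : ∀ u, h u * (f₀inv u - ((1 - lam) * f₀inv u + lam * f₁inv u))
        = lam * g u := by
      intro u; simp only [hg_def]; ring
    calc (∫ u in (0:ℝ)..1, h u * (f₀inv u - ((1 - lam) * f₀inv u + lam * f₁inv u)))
        = ∫ u in (0:ℝ)..1, lam * g u := by
          refine intervalIntegral.integral_congr (fun u _ => hpt u)
      _ = lam * ∫ u in (0:ℝ)..1, g u := intervalIntegral.integral_const_mul _ _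
      _ = lam * ∫ u in Ioo (0:ℝ) 1, g u := by rw [hIoc]
      _ = lam * ∫ x, (x - f₁inv (f₀ x)) * h (f₀ x) ∂μ₀ := by rw [hchange]
  · -- affine part
    have hbd : ∃ C, ∀ u, ‖h u‖ ≤ C := ⟨M, fun u => by simpa using hM u⟩
    have hint : ∀ F : ℝ → ℝ, IntegrableOn F (Ioo (0:ℝ) 1) →
        IntervalIntegrable (fun u => h u * F u) volume 0 1 := by
      intro F hF
      rw [intervalIntegrable_iff_integrableOn_Ioc_of_le (by norm_num : (0:ℝ) ≤ 1)]
      exact Integrable.bdd_mul (hF.congr_set_ae Ioo_ae_eq_Ioc.symm)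
        hmeas.aestronglyMeasurable (Filter.Eventually.of_forall hbd.choose_spec)
    have I₀ := hint f₀inv hmom₀
    have I₁ := hint (fun u => f₁inv u - f₀inv u) (hmom₁.sub hmom₀)
    refine ⟨∫ u in (0:ℝ)..1, h u * f₀inv u,
      ∫ u in (0:ℝ)..1, h u * (f₁inv u - f₀inv u), fun t _ => ?_⟩
    have hpt : ∀ u, h u * ((1 - t) * f₀inv u + t * f₁inv u)
        = h u * f₀inv u + t * (h u * (f₁inv u - f₀inv u)) := by intro u; ring
    calc (∫ u in (0:ℝ)..1, h u * ((1 - t) * f₀inv u + t * f₁inv u))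
        = ∫ u in (0:ℝ)..1, (h u * f₀inv u + t * (h u * (f₁inv u - f₀inv u))) := by
          refine intervalIntegral.integral_congr (fun u _ => hpt u)
      _ = (∫ u in (0:ℝ)..1, h u * f₀inv u)
            + ∫ u in (0:ℝ)..1, t * (h u * (f₁inv u - f₀inv u)) :=
          intervalIntegral.integral_add I₀ (I₁.const_mul t)
      _ = (∫ u in (0:ℝ)..1, h u * f₀inv u)
            + (∫ u in (0:ℝ)..1, h u * (f₁inv u - f₀inv u)) * t := by
          rw [intervalIntegral.integral_const_mul]; ring
end

section
/- (Displacement convexity of the interaction term) Let μ₀, μ₁, ν₀, ν₁ be probability measures on ℝ with continuous strictly increasing cdf's f₀, f₁, g₀, g₁. Let T_f = f₁⁻¹∘f₀ and T_g = g₁⁻¹∘g₀, and for λ ∈ [0,1] let μ_λ, ν_λ be the pushforwards of μ₀, ν₀ by x ↦ (1−λ)x + λT_f(x) and x ↦ (1−λ)x + λT_g(x) respectively. If V : ℝ → ℝ is convex, then λ ↦ ∬_{ℝ²} V(y − x) dμ_λ(y) dν_λ(x) is a convex function of λ on [0,1] (assuming the integrals are finite for all λ). -/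
open Set MeasureTheory

/-- Displacement convexity of the interaction term: with monotone transport
maps `T_f = f₁⁻¹∘f₀`, `T_g = g₁⁻¹∘g₀` and `μ_λ, ν_λ` the pushforwards of `μ₀, ν₀` by
`x ↦ (1−λ)x + λT(x)`, if `V` is convex then
`λ ↦ ∬ V(y − x) dμ_λ(y) dν_λ(x)` is convex on `[0,1]`. -/
theorem stmt10 (μ₀ μ₁ ν₀ ν₁ : Measure ℝ)
    [IsProbabilityMeasure μ₀] [IsProbabilityMeasure μ₁]
    [IsProbabilityMeasure ν₀] [IsProbabilityMeasure ν₁]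
    (f₀ f₁ g₀ g₁ f₁inv g₁inv V : ℝ → ℝ)
    (hf₀_cont : Continuous f₀) (hf₁_cont : Continuous f₁)
    (hg₀_cont : Continuous g₀) (hg₁_cont : Continuous g₁)
    (hf₀_mono : StrictMono f₀) (hf₁_mono : StrictMono f₁)
    (hg₀_mono : StrictMono g₀) (hg₁_mono : StrictMono g₁)
    (hcdff₀ : ∀ x, (μ₀ (Iic x)).toReal = f₀ x) (hcdff₁ : ∀ x, (μ₁ (Iic x)).toReal = f₁ x)
    (hcdfg₀ : ∀ x, (ν₀ (Iic x)).toReal = g₀ x) (hcdfg₁ : ∀ x, (ν₁ (Iic x)).toReal = g₁ x)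
    (hinvf_left : ∀ x, f₁inv (f₁ x) = x) (hinvf_right : ∀ u ∈ Ioo (0:ℝ) 1, f₁ (f₁inv u) = u)
    (hinvg_left : ∀ x, g₁inv (g₁ x) = x) (hinvg_right : ∀ u ∈ Ioo (0:ℝ) 1, g₁ (g₁inv u) = u)
    (hV : ConvexOn ℝ univ V)
    (hTf_meas : Measurable fun x => f₁inv (f₀ x)) (hTg_meas : Measurable fun x => g₁inv (g₀ x))
    (hint : ∀ lam ∈ Icc (0:ℝ) 1,
      Integrable
        (fun p : ℝ × ℝ =>
          V ((1 - lam) * (p.1 - p.2) + lam * (f₁inv (f₀ p.1) - g₁inv (g₀ p.2))))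
        (μ₀.prod ν₀)) :
    ConvexOn ℝ (Icc (0:ℝ) 1)
      (fun lam => ∫ x,
        (∫ y, V (y - x) ∂(μ₀.map (fun z => (1 - lam) * z + lam * f₁inv (f₀ z))))
          ∂(ν₀.map (fun z => (1 - lam) * z + lam * g₁inv (g₀ z)))) := by
  have hVcont : Continuous V := by
    rw [← continuousOn_univ]
    exact hV.continuousOn isOpen_univ
  set Tf := fun x => f₁inv (f₀ x) with hTf
  set Tg := fun x => g₁inv (g₀ x) with hTg
  have hSf : ∀ lam : ℝ, Measurable (fun z => (1 - lam) * z + lam * Tf z) := fun lam =>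
    (measurable_id.const_mul _).add (hTf_meas.const_mul _)
  have hSg : ∀ lam : ℝ, Measurable (fun z => (1 - lam) * z + lam * Tg z) := fun lam =>
    (measurable_id.const_mul _).add (hTg_meas.const_mul _)
  set F : ℝ → ℝ := fun lam => ∫ p : ℝ × ℝ,
      V ((1 - lam) * (p.1 - p.2) + lam * (Tf p.1 - Tg p.2)) ∂(μ₀.prod ν₀) with hF
  have key : ∀ lam ∈ Icc (0:ℝ) 1,
      (∫ x, (∫ y, V (y - x) ∂(μ₀.map (fun z => (1 - lam) * z + lam * Tf z)))
        ∂(ν₀.map (fun z => (1 - lam) * z + lam * Tg z))) = F lam := by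
    intro lam hl
    have h1 : ∀ x : ℝ, (∫ y, V (y - x) ∂(μ₀.map (fun z => (1 - lam) * z + lam * Tf z)))
        = ∫ y, V (((1 - lam) * y + lam * Tf y) - x) ∂μ₀ := by
      intro x
      rw [integral_map (hSf lam).aemeasurable]
      exact (hVcont.comp (continuous_id.sub continuous_const)).aestronglyMeasurable
    have hmeas3 : Measurable (fun p : ℝ × ℝ =>
        V (((1 - lam) * p.2 + lam * Tf p.2) - p.1)) := by
      apply hVcont.measurable.comp
      exact (((measurable_snd.const_mul _).add
        ((hTf_meas.comp measurable_snd).const_mul _)).sub measurable_fst)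
    have houter : AEStronglyMeasurable (fun x : ℝ =>
        ∫ y, V (((1 - lam) * y + lam * Tf y) - x) ∂μ₀)
        (ν₀.map (fun z => (1 - lam) * z + lam * Tg z)) :=
      (hmeas3.stronglyMeasurable.integral_prod_right').aestronglyMeasurable
    simp only [h1]
    rw [integral_map (hSg lam).aemeasurable houter]
    have h2 : ∀ x y : ℝ,
        (((1 - lam) * y + lam * Tf y) - ((1 - lam) * x + lam * Tg x))
        = (1 - lam) * (y - x) + lam * (Tf y - Tg x) := by intro x y; ring
    calc (∫ x, ∫ y, V (((1 - lam) * y + lam * Tf y) - ((1 - lam) * x + lam * Tg x)) ∂μ₀ ∂ν₀)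
        = ∫ x, ∫ y, V ((1 - lam) * (y - x) + lam * (Tf y - Tg x)) ∂μ₀ ∂ν₀ := by
          simp only [h2]
      _ = ∫ y, ∫ x, V ((1 - lam) * (y - x) + lam * (Tf y - Tg x)) ∂ν₀ ∂μ₀ :=
          (integral_integral_swap (hint lam hl)).symm
      _ = F lam := (integral_prod _ (hint lam hl)).symm
  refine ⟨convex_Icc 0 1, fun s hs t ht a b ha hb hab => ?_⟩
  have habmem : a • s + b • t ∈ Icc (0:ℝ) 1 := (convex_Icc 0 1) hs ht ha hb hab
  simp only [smul_eq_mul] at habmem ⊢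
  rw [key s hs, key t ht, key (a * s + b * t) habmem]
  have hptwise : ∀ p : ℝ × ℝ,
      V ((1 - (a * s + b * t)) * (p.1 - p.2) + (a * s + b * t) * (Tf p.1 - Tg p.2))
      ≤ a * V ((1 - s) * (p.1 - p.2) + s * (Tf p.1 - Tg p.2))
        + b * V ((1 - t) * (p.1 - p.2) + t * (Tf p.1 - Tg p.2)) := by
    intro p
    have harg : (1 - (a * s + b * t)) * (p.1 - p.2) + (a * s + b * t) * (Tf p.1 - Tg p.2)
        = a • ((1 - s) * (p.1 - p.2) + s * (Tf p.1 - Tg p.2))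
          + b • ((1 - t) * (p.1 - p.2) + t * (Tf p.1 - Tg p.2)) := by
      simp only [smul_eq_mul]
      linear_combination (p.2 - p.1) * hab
    rw [harg]
    have := hV.2 (mem_univ ((1 - s) * (p.1 - p.2) + s * (Tf p.1 - Tg p.2)))
      (mem_univ ((1 - t) * (p.1 - p.2) + t * (Tf p.1 - Tg p.2))) ha hb hab
    simpa using this
  calc F (a * s + b * t)
      ≤ ∫ p : ℝ × ℝ, (a * V ((1 - s) * (p.1 - p.2) + s * (Tf p.1 - Tg p.2))
        + b * V ((1 - t) * (p.1 - p.2) + t * (Tf p.1 - Tg p.2))) ∂(μ₀.prod ν₀) := by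
        apply integral_mono (hint _ habmem)
        · exact ((hint s hs).const_mul a).add ((hint t ht).const_mul b)
        · exact hptwise
    _ = a * F s + b * F t := by
        rw [integral_add ((hint s hs).const_mul a) ((hint t ht).const_mul b),
          integral_const_mul, integral_const_mul]
end

section
/- Let w be nonnegative, even, integrable, ∫w = 1, with Ω(x) = ∫_{−∞}^x w. Let f, g be cdf's of probability measures on ℝ. Then for any x₁ ∈ ℝ: ∫₀^∞ w(x) ∫_{(x₁, x₁+x]} (g(x₁) − g(y−x)) df(y) dx = ∬ 1{x₁ < y, z ≤ x₁, 0 ≤ y−z} Ω(−(y−z)) dg(z) df(y), i.e., the window-integral representation of the one-sided part of ξ_φ equals the kernel representation with Ω(−|·|). -/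
open Set MeasureTheory

/-- The window-integral representation of the one-sided part of `ξ_φ`
equals the kernel representation:
`∫₀^∞ w(x) ∫_{(x₁,x₁+x]} (g(x₁) − g(y−x)) df(y) dx
  = ∬ 1{x₁ < y, z ≤ x₁, 0 ≤ y−z} Ω(−(y−z)) dg(z) df(y)`,
where `f, g` are the cdf's of `μ, ν` and `Ω(x) = ∫_{−∞}^x w`. -/
theorem stmt13 (μ ν : Measure ℝ) [IsProbabilityMeasure μ] [IsProbabilityMeasure ν]
    (w : ℝ → ℝ) (hw_nonneg : ∀ x, 0 ≤ w x) (hw_even : ∀ x, w (-x) = w x)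
    (hw_int : Integrable w) (hw_norm : (∫ x, w x) = 1)
    (x₁ : ℝ) :
    (∫ x in Ioi (0:ℝ), w x *
        ∫ y in Ioc x₁ (x₁ + x), ((ν (Iic x₁)).toReal - (ν (Iic (y - x))).toReal) ∂μ) =
      ∫ p : ℝ × ℝ,
        (if x₁ < p.1 ∧ p.2 ≤ x₁ ∧ 0 ≤ p.1 - p.2 then ∫ t in Iic (-(p.1 - p.2)), w t else 0)
        ∂(μ.prod ν) := by
  -- measurable representative of w
  obtain ⟨v, hv_meas, hv_ae⟩ : ∃ v : ℝ → ℝ, Measurable v ∧ w =ᵐ[volume] v :=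
    ⟨hw_int.1.aemeasurable.mk w, hw_int.1.aemeasurable.measurable_mk,
      hw_int.1.aemeasurable.ae_eq_mk⟩
  have hv_int : Integrable v := hw_int.congr hv_ae
  have hv_nonneg : ∀ᵐ x : ℝ, 0 ≤ v x := hv_ae.mono fun x hx => hx ▸ hw_nonneg x
  set c : ENNReal := ν (Iic x₁) with hc
  set N : ℝ → ENNReal := fun a => ν (Iic a) with hNdef
  have hN : Measurable N :=
    Monotone.measurable (fun a b hab => measure_mono (Iic_subset_Iic.2 hab))
  have hsub : ∀ a : ℝ, ν (Ioc a x₁) = c - N a := by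
    intro a
    by_cases h : a ≤ x₁
    · rw [← Iic_sdiff_Iic,
        measure_diff (Iic_subset_Iic.2 h) measurableSet_Iic.nullMeasurableSet (measure_ne_top ν _)]
    · rw [Ioc_eq_empty (fun hlt => h hlt.le), measure_empty, Eq.comm, tsub_eq_zero_iff_le]
      exact measure_mono (Iic_subset_Iic.2 (le_of_not_ge h))
  -- the big kernel
  set S : Set (ℝ × (ℝ × ℝ)) :=
    {q | x₁ < q.2.1 ∧ q.2.1 ≤ x₁ + q.1 ∧ q.2.1 - q.1 < q.2.2 ∧ q.2.2 ≤ x₁} with hS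
  have hSm : MeasurableSet S := by
    have h1 : MeasurableSet {q : ℝ × (ℝ × ℝ) | x₁ < q.2.1} :=
      measurableSet_lt measurable_const (measurable_fst.comp measurable_snd)
    have h2 : MeasurableSet {q : ℝ × (ℝ × ℝ) | q.2.1 ≤ x₁ + q.1} :=
      measurableSet_le (measurable_fst.comp measurable_snd) (measurable_const.add measurable_fst)
    have h3 : MeasurableSet {q : ℝ × (ℝ × ℝ) | q.2.1 - q.1 < q.2.2} :=
      measurableSet_lt ((measurable_fst.comp measurable_snd).sub measurable_fst)
        (measurable_snd.comp measurable_snd)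
    have h4 : MeasurableSet {q : ℝ × (ℝ × ℝ) | q.2.2 ≤ x₁} :=
      measurableSet_le (measurable_snd.comp measurable_snd) measurable_const
    exact h1.inter (h2.inter (h3.inter h4))
  set K : ℝ × (ℝ × ℝ) → ENNReal :=
    fun q => ENNReal.ofReal (v q.1) * S.indicator 1 q with hKdef
  have hK : Measurable K :=
    (ENNReal.measurable_ofReal.comp (hv_meas.comp measurable_fst)).mul
      (measurable_const.indicator hSm)
  -- step D : slice of the kernel integral
  have hD : ∀ x : ℝ, ENNReal.ofReal (v x) * (∫⁻ y in Ioc x₁ (x₁ + x), (c - N (y - x)) ∂μ)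
      = ∫⁻ p, K (x, p) ∂(μ.prod ν) := by
    intro x
    symm
    have hmeas : AEMeasurable (fun p : ℝ × ℝ => S.indicator (1 : ℝ × (ℝ × ℝ) → ENNReal) (x, p))
        (μ.prod ν) :=
      ((measurable_const.indicator hSm).comp measurable_prodMk_left).aemeasurable
    calc ∫⁻ p, K (x, p) ∂(μ.prod ν)
        = ∫⁻ p : ℝ × ℝ, ENNReal.ofReal (v x) * S.indicator 1 (x, p) ∂(μ.prod ν) := rfl
      _ = ENNReal.ofReal (v x) * ∫⁻ p : ℝ × ℝ, S.indicator 1 (x, p) ∂(μ.prod ν) :=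
          lintegral_const_mul' _ _ ENNReal.ofReal_ne_top
      _ = ENNReal.ofReal (v x) *
            ∫⁻ y, ∫⁻ z, S.indicator 1 (x, (y, z)) ∂ν ∂μ := by
          rw [lintegral_prod _ hmeas]
      _ = ENNReal.ofReal (v x) *
            ∫⁻ y, (Ioc x₁ (x₁ + x)).indicator (fun y => c - N (y - x)) y ∂μ := by
          congr 1
          refine lintegral_congr fun y => ?_
          by_cases hy : x₁ < y ∧ y ≤ x₁ + x
          · have hmem : ∀ z : ℝ, ((x, (y, z)) ∈ S ↔ z ∈ Ioc (y - x) x₁) := by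
              intro z
              simp only [hS, mem_setOf_eq, mem_Ioc]
              exact ⟨fun h => ⟨h.2.2.1, h.2.2.2⟩, fun h => ⟨hy.1, hy.2, h.1, h.2⟩⟩
            calc ∫⁻ z, S.indicator 1 (x, (y, z)) ∂ν
                = ∫⁻ z, (Ioc (y - x) x₁).indicator 1 z ∂ν := by
                  refine lintegral_congr fun z => ?_
                  simp only [Set.indicator_apply, Pi.one_apply]
                  exact if_congr (hmem z) rfl rfl
              _ = ν (Ioc (y - x) x₁) := lintegral_indicator_one measurableSet_Ioc
              _ = c - N (y - x) := hsub _
              _ = (Ioc x₁ (x₁ + x)).indicator (fun y => c - N (y - x)) y :=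
                  (Set.indicator_of_mem (mem_Ioc.2 hy) (fun y => c - N (y - x))).symm
          · have h0 : ∀ z : ℝ, S.indicator (1 : ℝ × (ℝ × ℝ) → ENNReal) (x, (y, z)) = 0 :=
              fun z => Set.indicator_of_notMem (fun h => hy ⟨h.1, h.2.1⟩) _
            rw [lintegral_congr h0, lintegral_zero,
              Set.indicator_of_notMem (fun h => hy (mem_Ioc.1 h))]
      _ = ENNReal.ofReal (v x) * ∫⁻ y in Ioc x₁ (x₁ + x), (c - N (y - x)) ∂μ := by
          rw [lintegral_indicator measurableSet_Ioc]
  -- bound on the inner lintegral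
  have hGle : ∀ x : ℝ, (∫⁻ y in Ioc x₁ (x₁ + x), (c - N (y - x)) ∂μ) ≤ 1 := by
    intro x
    calc ∫⁻ y in Ioc x₁ (x₁ + x), (c - N (y - x)) ∂μ
        ≤ ∫⁻ _ in Ioc x₁ (x₁ + x), 1 ∂μ :=
          lintegral_mono fun y => le_trans tsub_le_self prob_le_one
      _ = μ (Ioc x₁ (x₁ + x)) := by
          rw [setLIntegral_one]
      _ ≤ 1 := prob_le_one
  -- step B : LHS as a toReal of a lintegral
  have hB : (∫ x in Ioi (0:ℝ), w x *
        ∫ y in Ioc x₁ (x₁ + x), ((ν (Iic x₁)).toReal - (ν (Iic (y - x))).toReal) ∂μ)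
      = (∫⁻ x in Ioi (0:ℝ), ∫⁻ p, K (x, p) ∂(μ.prod ν)).toReal := by
    rw [← integral_toReal ?_ ?_]
    · refine integral_congr_ae ?_
      have h1 : ∀ᵐ x ∂(volume.restrict (Ioi (0:ℝ))), w x = v x := ae_restrict_of_ae hv_ae
      filter_upwards [h1] with x hx
      rw [← hD x]
      have hin : (∫ y in Ioc x₁ (x₁ + x), ((ν (Iic x₁)).toReal - (ν (Iic (y - x))).toReal) ∂μ)
          = (∫⁻ y in Ioc x₁ (x₁ + x), (c - N (y - x)) ∂μ).toReal := by
        rw [← integral_toReal ?_ ?_]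
        · refine setIntegral_congr_fun measurableSet_Ioc fun y hy => ?_
          have hle : N (y - x) ≤ c :=
            measure_mono (Iic_subset_Iic.2 (by linarith [hy.2] : y - x ≤ x₁))
          rw [ENNReal.toReal_sub_of_le hle (measure_ne_top ν _)]
        · exact (measurable_const.sub (hN.comp (measurable_id.sub_const x))).aemeasurable
        · exact ae_of_all _ fun y => lt_of_le_of_lt tsub_le_self (measure_lt_top ν _)
      rw [hin, ENNReal.toReal_mul, ENNReal.toReal_ofReal (hx ▸ hw_nonneg x), hx]
    · exact (hK.lintegral_prod_right'.comp measurable_id).aemeasurable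
    · refine ae_of_all _ fun x => ?_
      rw [← hD x]
      calc ENNReal.ofReal (v x) * ∫⁻ y in Ioc x₁ (x₁ + x), (c - N (y - x)) ∂μ
          ≤ ENNReal.ofReal (v x) * 1 := mul_le_mul_right (hGle x) _
        _ < ⊤ := by rw [mul_one]; exact ENNReal.ofReal_lt_top
  -- step E : Tonelli swap
  have hE : (∫⁻ x in Ioi (0:ℝ), ∫⁻ p, K (x, p) ∂(μ.prod ν))
      = ∫⁻ p, (∫⁻ x in Ioi (0:ℝ), K (x, p)) ∂(μ.prod ν) :=
    lintegral_lintegral_swap hK.aemeasurable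
  -- step F : the inner x-integral
  set S' : Set (ℝ × ℝ) := {p | x₁ < p.1 ∧ p.2 ≤ x₁ ∧ 0 ≤ p.1 - p.2} with hS'
  have hS'm : MeasurableSet S' := by
    have h1 : MeasurableSet {p : ℝ × ℝ | x₁ < p.1} := measurableSet_lt measurable_const measurable_fst
    have h2 : MeasurableSet {p : ℝ × ℝ | p.2 ≤ x₁} := measurableSet_le measurable_snd measurable_const
    have h3 : MeasurableSet {p : ℝ × ℝ | 0 ≤ p.1 - p.2} :=
      measurableSet_le measurable_const (measurable_fst.sub measurable_snd)
    exact h1.inter (h2.inter h3)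
  have hF : ∀ p : ℝ × ℝ, (∫⁻ x in Ioi (0:ℝ), K (x, p))
      = S'.indicator (fun p => ENNReal.ofReal (∫ t in Iic (-(p.1 - p.2)), w t)) p := by
    intro p
    by_cases hp : x₁ < p.1 ∧ p.2 ≤ x₁
    · have ha : (0:ℝ) < p.1 - p.2 := by linarith [hp.1, hp.2]
      have hmemS' : p ∈ S' := ⟨hp.1, hp.2, ha.le⟩
      have hpt : ∀ x : ℝ, K (x, p) = (Ioi (p.1 - p.2)).indicator (fun x => ENNReal.ofReal (v x)) x := by
        intro x
        have hmem : ((x, p) ∈ S ↔ x ∈ Ioi (p.1 - p.2)) := by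
          simp only [hS, mem_setOf_eq, mem_Ioi]
          constructor
          · rintro ⟨-, -, h3, -⟩; linarith
          · intro h; exact ⟨hp.1, by linarith [hp.2], by linarith, hp.2⟩
        simp only [hKdef, Set.indicator_apply, Pi.one_apply, mul_ite, mul_one, mul_zero]
        exact if_congr hmem rfl rfl
      have hw_flip : (∫ x in Ioi (p.1 - p.2), w x) = ∫ t in Iic (-(p.1 - p.2)), w t := by
        rw [← integral_comp_neg_Ioi]
        exact setIntegral_congr_fun measurableSet_Ioi fun x _ => (hw_even x).symm
      calc ∫⁻ x in Ioi (0:ℝ), K (x, p)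
          = ∫⁻ x in Ioi (0:ℝ), (Ioi (p.1 - p.2)).indicator (fun x => ENNReal.ofReal (v x)) x :=
            lintegral_congr fun x => hpt x
        _ = ∫⁻ x in Ioi (p.1 - p.2) ∩ Ioi 0, ENNReal.ofReal (v x) := by
            rw [lintegral_indicator measurableSet_Ioi, Measure.restrict_restrict measurableSet_Ioi]
        _ = ∫⁻ x in Ioi (p.1 - p.2), ENNReal.ofReal (v x) := by
            rw [Ioi_inter_Ioi, sup_eq_left.2 ha.le]
        _ = ENNReal.ofReal (∫ x in Ioi (p.1 - p.2), v x) :=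
            (ofReal_integral_eq_lintegral_ofReal hv_int.integrableOn
              (ae_restrict_of_ae hv_nonneg)).symm
        _ = ENNReal.ofReal (∫ x in Ioi (p.1 - p.2), w x) := by
            rw [integral_congr_ae (ae_restrict_of_ae hv_ae.symm)]
        _ = ENNReal.ofReal (∫ t in Iic (-(p.1 - p.2)), w t) := by rw [hw_flip]
        _ = S'.indicator (fun p => ENNReal.ofReal (∫ t in Iic (-(p.1 - p.2)), w t)) p :=
            (Set.indicator_of_mem hmemS'
              (fun q => ENNReal.ofReal (∫ t in Iic (-(q.1 - q.2)), w t))).symm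
    · have h0 : ∀ x : ℝ, K (x, p) = 0 := by
        intro x
        have : (x, p) ∉ S := fun h => hp ⟨h.1, h.2.2.2⟩
        simp [hKdef, Set.indicator_of_notMem this]
      rw [lintegral_congr h0, lintegral_zero,
        Set.indicator_of_notMem (fun h => hp ⟨h.1, h.2.1⟩)]
  -- step G : RHS as a toReal of a lintegral
  have hG : (∫ p : ℝ × ℝ,
        (if x₁ < p.1 ∧ p.2 ≤ x₁ ∧ 0 ≤ p.1 - p.2 then ∫ t in Iic (-(p.1 - p.2)), w t else 0)
        ∂(μ.prod ν))
      = (∫⁻ p, S'.indicator (fun p => ENNReal.ofReal (∫ t in Iic (-(p.1 - p.2)), w t)) p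
          ∂(μ.prod ν)).toReal := by
    rw [← integral_toReal ?_ ?_]
    · refine integral_congr_ae (ae_of_all _ fun p => ?_)
      dsimp only
      by_cases hp : x₁ < p.1 ∧ p.2 ≤ x₁ ∧ 0 ≤ p.1 - p.2
      · have hpm : p ∈ S' := hp
        rw [if_pos hp, Set.indicator_of_mem hpm,
          ENNReal.toReal_ofReal (setIntegral_nonneg measurableSet_Iic fun t _ => hw_nonneg t)]
      · have hpm : p ∉ S' := hp
        rw [if_neg hp, Set.indicator_of_notMem hpm]; simp
    · refine (Measurable.indicator ?_ hS'm).aemeasurable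
      refine ENNReal.measurable_ofReal.comp ?_
      have hmono : Monotone (fun a : ℝ => ∫ t in Iic a, w t) := fun a b hab =>
        setIntegral_mono_set hw_int.integrableOn (ae_of_all _ hw_nonneg)
          (HasSubset.Subset.eventuallyLE (Iic_subset_Iic.2 hab))
      exact hmono.measurable.comp ((measurable_fst.sub measurable_snd).neg)
    · refine ae_of_all _ fun p => ?_
      by_cases hp : p ∈ S'
      · rw [Set.indicator_of_mem hp]; exact ENNReal.ofReal_lt_top
      · rw [Set.indicator_of_notMem hp]; simp
  rw [hB, hE, lintegral_congr hF, ← hG]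
end

section
/- Let h_g : [0,1] → [0,1] be a continuous strictly increasing bijection with h_g(0)=0, h_g(1)=1, and let g_λ, g₀ : ℝ → [0,1] be continuous strictly increasing cdf's such that g₀ − g_λ is Lebesgue-integrable on ℝ. Then ∫_ℝ (∫₀^{g_λ(x)} h_g⁻¹(u)du − ∫₀^{g₀(x)} h_g⁻¹(u)du) dx = ∫₀¹ h_g⁻¹(u)(g₀⁻¹(u) − g_λ⁻¹(u)) du. -/
open Set MeasureTheory intervalIntegral

set_option maxHeartbeats 1000000

/-- For continuous strictly increasing cdf's `g₀, g_λ` with integrable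
difference and `h_g⁻¹` the inverse of a continuous strictly increasing bijection of `[0,1]`,
`∫_ℝ (∫₀^{g_λ(x)} h_g⁻¹ − ∫₀^{g₀(x)} h_g⁻¹) dx = ∫₀¹ h_g⁻¹(u)(g₀⁻¹(u) − g_λ⁻¹(u)) du`. -/
theorem stmt16 (hg hginv g₀ glam g₀inv glaminv : ℝ → ℝ)
    (hg_cont : ContinuousOn hg (Icc 0 1)) (hg_mono : StrictMonoOn hg (Icc 0 1))
    (hg_maps : MapsTo hg (Icc 0 1) (Icc 0 1)) (hg_surj : SurjOn hg (Icc 0 1) (Icc 0 1))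
    (hg0 : hg 0 = 0) (hg1 : hg 1 = 1)
    (hginv_left : ∀ u ∈ Icc (0:ℝ) 1, hginv (hg u) = u)
    (hginv_right : ∀ u ∈ Icc (0:ℝ) 1, hg (hginv u) = u)
    (hginv_range : ∀ u ∈ Icc (0:ℝ) 1, hginv u ∈ Icc (0:ℝ) 1)
    (hg₀_cont : Continuous g₀) (hglam_cont : Continuous glam)
    (hg₀_mono : StrictMono g₀) (hglam_mono : StrictMono glam)
    (hg₀_range : Set.range g₀ = Ioo (0:ℝ) 1) (hglam_range : Set.range glam = Ioo (0:ℝ) 1)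
    (hinv₀_left : ∀ x, g₀inv (g₀ x) = x) (hinv₀_right : ∀ u ∈ Ioo (0:ℝ) 1, g₀ (g₀inv u) = u)
    (hinvl_left : ∀ x, glaminv (glam x) = x)
    (hinvl_right : ∀ u ∈ Ioo (0:ℝ) 1, glam (glaminv u) = u)
    (hdiff_int : Integrable (fun x => g₀ x - glam x)) :
    (∫ x, ((∫ u in (0:ℝ)..(glam x), hginv u) - ∫ u in (0:ℝ)..(g₀ x), hginv u)) =
      ∫ u in (0:ℝ)..1, hginv u * (g₀inv u - glaminv u) := by
  classical
  set μ : Measure ℝ := volume.restrict (Ioo (0:ℝ) 1) with hμdef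
  have hfin : IsFiniteMeasure μ := by
    constructor
    rw [hμdef, Measure.restrict_apply_univ, Real.volume_Ioo]
    simp
  have clamp_mem : ∀ u : ℝ, max 0 (min 1 u) ∈ Icc (0:ℝ) 1 :=
    fun u => ⟨le_max_left _ _, max_le zero_le_one (min_le_left _ _)⟩
  set H : ℝ → ℝ := fun u => hginv (max 0 (min 1 u)) with hHdef
  have hginv_monoOn : ∀ a ∈ Icc (0:ℝ) 1, ∀ b ∈ Icc (0:ℝ) 1, a ≤ b → hginv a ≤ hginv b := by
    intro a ha b hb hab
    have h := hg_mono.le_iff_le (hginv_range a ha) (hginv_range b hb)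
    rw [hginv_right a ha, hginv_right b hb] at h
    exact h.mp hab
  have hH_mono : Monotone H := fun u v huv =>
    hginv_monoOn _ (clamp_mem u) _ (clamp_mem v)
      (max_le_max le_rfl (min_le_min le_rfl huv))
  have hH_meas : Measurable H := hH_mono.measurable
  have hH_mem : ∀ u, H u ∈ Icc (0:ℝ) 1 := fun u => hginv_range _ (clamp_mem u)
  have hH_eq : ∀ u ∈ Icc (0:ℝ) 1, H u = hginv u := by
    intro u hu
    simp only [hHdef]
    rw [min_eq_right hu.2, max_eq_right hu.1]
  have hH_abs : ∀ u, |H u| ≤ 1 := fun u => abs_le.2 ⟨by linarith [(hH_mem u).1], (hH_mem u).2⟩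
  have hglam01 : ∀ x, glam x ∈ Ioo (0:ℝ) 1 := fun x => hglam_range ▸ mem_range_self x
  have hg₀01 : ∀ x, g₀ x ∈ Ioo (0:ℝ) 1 := fun x => hg₀_range ▸ mem_range_self x
  have hlt_lam : ∀ u ∈ Ioo (0:ℝ) 1, ∀ x, (u < glam x ↔ glaminv u < x) := by
    intro u hu x
    nth_rewrite 1 [← hinvl_right u hu]
    exact hglam_mono.lt_iff_lt
  have hlt_g₀ : ∀ u ∈ Ioo (0:ℝ) 1, ∀ x, (u < g₀ x ↔ g₀inv u < x) := by
    intro u hu x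
    nth_rewrite 1 [← hinv₀_right u hu]
    exact hg₀_mono.lt_iff_lt
  set D : ℝ → ℝ → ℝ :=
    fun x u => (if u < glam x then (1:ℝ) else 0) - (if u < g₀ x then (1:ℝ) else 0) with hDdef
  set K : ℝ → ℝ → ℝ := fun x u => H u * D x u with hKdef
  have hD_abs : ∀ x u, |D x u| ≤ 1 := by
    intro x u
    simp only [hDdef]
    split_ifs <;> norm_num
  have hD_ind : ∀ x u, |D x u| ≤
      (Icc (min (glam x) (g₀ x)) (max (glam x) (g₀ x))).indicator (fun _ => (1:ℝ)) u := by
    intro x u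
    have hnn : (0:ℝ) ≤
        (Icc (min (glam x) (g₀ x)) (max (glam x) (g₀ x))).indicator (fun _ => (1:ℝ)) u :=
      indicator_nonneg (fun _ _ => zero_le_one) u
    simp only [hDdef]
    by_cases h1 : u < glam x <;> by_cases h2 : u < g₀ x
    · rw [if_pos h1, if_pos h2]; simpa using hnn
    · have hmem : u ∈ Icc (min (glam x) (g₀ x)) (max (glam x) (g₀ x)) :=
        ⟨(min_le_right _ _).trans (not_lt.1 h2), h1.le.trans (le_max_left _ _)⟩
      rw [if_pos h1, if_neg h2, indicator_of_mem hmem]; norm_num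
    · have hmem : u ∈ Icc (min (glam x) (g₀ x)) (max (glam x) (g₀ x)) :=
        ⟨(min_le_left _ _).trans (not_lt.1 h1), h2.le.trans (le_max_right _ _)⟩
      rw [if_neg h1, if_pos h2, indicator_of_mem hmem]; norm_num
    · rw [if_neg h1, if_neg h2]; simpa using hnn
  have hS1 : MeasurableSet {p : ℝ × ℝ | p.2 < glam p.1} :=
    measurableSet_lt measurable_snd (hglam_cont.measurable.comp measurable_fst)
  have hS2 : MeasurableSet {p : ℝ × ℝ | p.2 < g₀ p.1} :=
    measurableSet_lt measurable_snd (hg₀_cont.measurable.comp measurable_fst)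
  have hKm : Measurable (Function.uncurry K) := by
    simp only [hKdef, hDdef, Function.uncurry]
    exact (hH_meas.comp measurable_snd).mul
      ((Measurable.ite hS1 measurable_const measurable_const).sub
        (Measurable.ite hS2 measurable_const measurable_const))
  have hKx_meas : ∀ x, Measurable (K x) := by
    intro x
    simp only [hKdef, hDdef]
    exact hH_meas.mul
      ((Measurable.ite (measurableSet_lt measurable_id measurable_const) measurable_const
          measurable_const).sub
        (Measurable.ite (measurableSet_lt measurable_id measurable_const) measurable_const
          measurable_const))
  have hK_bd : ∀ x u, ‖K x u‖ ≤ 1 := by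
    intro x u
    rw [Real.norm_eq_abs, hKdef]
    calc |H u * D x u| = |H u| * |D x u| := abs_mul _ _
    _ ≤ 1 * 1 := mul_le_mul (hH_abs u) (hD_abs x u) (abs_nonneg _) zero_le_one
    _ = 1 := one_mul 1
  have hKx_int : ∀ x, Integrable (K x) μ := fun x =>
    Integrable.mono' (integrable_const 1) (hKx_meas x).aestronglyMeasurable
      (ae_of_all _ fun u => hK_bd x u)
  have habs_int : Integrable (fun x => |g₀ x - glam x|) := hdiff_int.abs
  have hKnorm_le : ∀ x, ∫ u, ‖K x u‖ ∂μ ≤ |g₀ x - glam x| := by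
    intro x
    set m := min (glam x) (g₀ x) with hm
    set M := max (glam x) (g₀ x) with hM
    have hind_int_vol : Integrable ((Icc m M).indicator (fun _ => (1:ℝ))) volume := by
      apply ((integrableOn_const_iff).mpr (Or.inr ?_)).integrable_indicator measurableSet_Icc
      rw [Real.volume_Icc]; exact ENNReal.ofReal_lt_top
    have hind_int : Integrable ((Icc m M).indicator (fun _ => (1:ℝ))) μ := by
      rw [hμdef]; exact hind_int_vol.restrict
    have step1 : ∫ u, ‖K x u‖ ∂μ ≤ ∫ u, (Icc m M).indicator (fun _ => (1:ℝ)) u ∂μ := by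
      apply integral_mono_of_nonneg (ae_of_all _ fun u => norm_nonneg _) hind_int
      apply ae_of_all
      intro u
      calc ‖K x u‖ = |H u| * |D x u| := by rw [Real.norm_eq_abs, hKdef]; exact abs_mul _ _
      _ ≤ |D x u| := mul_le_of_le_one_left (abs_nonneg _) (hH_abs u)
      _ ≤ _ := hD_ind x u
    have step2 : ∫ u, (Icc m M).indicator (fun _ => (1:ℝ)) u ∂μ ≤
        ∫ u, (Icc m M).indicator (fun _ => (1:ℝ)) u := by
      apply integral_mono_measure Measure.restrict_le_self ?_ hind_int_vol
      exact ae_of_all _ fun u => indicator_nonneg (fun _ _ => zero_le_one) u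
    have step3 : ∫ u, (Icc m M).indicator (fun _ => (1:ℝ)) u = |g₀ x - glam x| := by
      rw [integral_indicator_const (1:ℝ) measurableSet_Icc, measureReal_def, Real.volume_Icc, smul_eq_mul,
        mul_one, ENNReal.toReal_ofReal (by simp [hm, hM, min_le_max]),
        max_sub_min_eq_abs, abs_sub_comm]
    linarith
  have hK_int : Integrable (Function.uncurry K) (volume.prod μ) := by
    rw [integrable_prod_iff hKm.aestronglyMeasurable]
    refine ⟨ae_of_all _ fun x => hKx_int x, ?_⟩
    apply Integrable.mono' habs_int
    · exact hKm.norm.aestronglyMeasurable.integral_prod_right'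
    · apply ae_of_all
      intro x
      rw [Real.norm_eq_abs, abs_of_nonneg (integral_nonneg fun u => norm_nonneg _)]
      exact hKnorm_le x
  -- layer-cake identity for the inner integrals
  have hinner : ∀ c ∈ Ioo (0:ℝ) 1,
      (∫ u in (0:ℝ)..c, hginv u) = ∫ u, (Iio c).indicator H u ∂μ := by
    intro c hc
    rw [MeasureTheory.integral_indicator measurableSet_Iio, hμdef, Measure.restrict_restrict measurableSet_Iio]
    have hset : Iio c ∩ Ioo (0:ℝ) 1 = Ioo 0 c := by
      ext u
      simp only [mem_inter_iff, mem_Iio, mem_Ioo]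
      constructor
      · rintro ⟨h1, h2, h3⟩; exact ⟨h2, h1⟩
      · rintro ⟨h1, h2⟩; exact ⟨h2, h1, h2.trans hc.2⟩
    rw [hset, ← integral_Ioc_eq_integral_Ioo, ← intervalIntegral.integral_of_le hc.1.le]
    apply intervalIntegral.integral_congr
    intro u hu
    rw [uIcc_of_le hc.1.le] at hu
    exact (hH_eq u ⟨hu.1, hu.2.trans hc.2.le⟩).symm
  have hind_int_mu : ∀ c : ℝ, Integrable ((Iio c).indicator H) μ := by
    intro c
    apply Integrable.mono' (integrable_const 1)
      ((hH_meas.indicator measurableSet_Iio).aestronglyMeasurable)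
    apply ae_of_all
    intro u
    rw [Real.norm_eq_abs]
    by_cases h : u ∈ Iio c
    · simpa [indicator_of_mem h] using hH_abs u
    · simp [indicator_of_notMem h]
  have hinner_eq : ∀ x,
      ((∫ u in (0:ℝ)..(glam x), hginv u) - ∫ u in (0:ℝ)..(g₀ x), hginv u) =
        ∫ u, K x u ∂μ := by
    intro x
    have hptw : ∀ u, K x u =
        (Iio (glam x)).indicator H u - (Iio (g₀ x)).indicator H u := by
      intro u
      simp only [hKdef, hDdef, indicator_apply, mem_Iio, mul_sub, mul_ite, mul_one, mul_zero]
    rw [hinner _ (hglam01 x), hinner _ (hg₀01 x),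
      ← integral_sub (hind_int_mu (glam x)) (hind_int_mu (g₀ x))]
    exact integral_congr_ae (ae_of_all _ fun u => (hptw u).symm)
  -- swap the integrals
  have h1 : (∫ x, ((∫ u in (0:ℝ)..(glam x), hginv u) - ∫ u in (0:ℝ)..(g₀ x), hginv u)) =
      ∫ x, ∫ u, K x u ∂μ := integral_congr_ae (ae_of_all _ hinner_eq)
  rw [h1, integral_integral_swap hK_int]
  -- compute the outer integral for each fixed level u
  have hpost : ∀ u ∈ Ioo (0:ℝ) 1,
      (∫ x, K x u) = hginv u * (g₀inv u - glaminv u) := by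
    intro u hu
    set a := glaminv u with ha
    set b := g₀inv u with hb
    have hrew : ∀ x, K x u = H u * ((Ioc a b).indicator (fun _ => (1:ℝ)) x -
        (Ioc b a).indicator (fun _ => (1:ℝ)) x) := by
      intro x
      simp only [hKdef, hDdef, hlt_lam u hu x, hlt_g₀ u hu x, indicator_apply, mem_Ioc]
      congr 1
      rcases lt_or_ge a x with h1 | h1 <;> rcases lt_or_ge b x with h2 | h2 <;>
        simp [← ha, ← hb, h1, h2, not_lt.2, not_le.2, lt_irrefl] <;> intro h <;> linarith
    have hint1 : Integrable ((Ioc a b).indicator (fun _ => (1:ℝ))) volume := by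
      apply ((integrableOn_const_iff).mpr (Or.inr ?_)).integrable_indicator measurableSet_Ioc
      rw [Real.volume_Ioc]; exact ENNReal.ofReal_lt_top
    have hint2 : Integrable ((Ioc b a).indicator (fun _ => (1:ℝ))) volume := by
      apply ((integrableOn_const_iff).mpr (Or.inr ?_)).integrable_indicator measurableSet_Ioc
      rw [Real.volume_Ioc]; exact ENNReal.ofReal_lt_top
    have hvol : (volume (Ioc a b)).toReal - (volume (Ioc b a)).toReal = b - a := by
      rw [Real.volume_Ioc, Real.volume_Ioc]
      rcases le_total a b with h | h
      · rw [ENNReal.toReal_ofReal (by linarith),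
          show ENNReal.ofReal (a - b) = 0 from ENNReal.ofReal_eq_zero.mpr (by linarith)]
        simp
      · rw [show ENNReal.ofReal (b - a) = 0 from ENNReal.ofReal_eq_zero.mpr (by linarith),
          ENNReal.toReal_ofReal (by linarith)]
        simp
    calc (∫ x, K x u)
        = ∫ x, H u * ((Ioc a b).indicator (fun _ => (1:ℝ)) x -
            (Ioc b a).indicator (fun _ => (1:ℝ)) x) :=
          integral_congr_ae (ae_of_all _ hrew)
      _ = H u * ((∫ x, (Ioc a b).indicator (fun _ => (1:ℝ)) x) -
            ∫ x, (Ioc b a).indicator (fun _ => (1:ℝ)) x) := by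
          rw [MeasureTheory.integral_const_mul, integral_sub hint1 hint2]
      _ = H u * ((volume (Ioc a b)).toReal - (volume (Ioc b a)).toReal) := by
          rw [integral_indicator_const (1:ℝ) measurableSet_Ioc,
            integral_indicator_const (1:ℝ) measurableSet_Ioc, measureReal_def, measureReal_def, smul_eq_mul, smul_eq_mul,
            mul_one, mul_one]
      _ = hginv u * (b - a) := by
          rw [hvol, hH_eq u ⟨hu.1.le, hu.2.le⟩]
  rw [intervalIntegral.integral_of_le zero_le_one, integral_Ioc_eq_integral_Ioo, hμdef]
  exact setIntegral_congr_fun measurableSet_Ioo hpost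
end
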